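/- For n×n quaternion matrices M and N, define the 3n×3n block matrices A_M = [[0, I_n, M],[0, 0, I_n],[0, 0, 0]] and A_N = [[0, I_n, N],[0, 0, I_n],[0, 0, 0]] (which satisfy A_M³ = A_N³ = 0). Then A_M is unitarily similar to A_N if and only if M is unitarily similar to N. -/

import Mathlib

open Matrix
open scoped Quaternion

noncomputable section

/-- A quaternion matrix `U` is unitary if `Uᴴ * U = 1`. -/
def IsUnitaryM {m : Type*} [Fintype m] [DecidableEq m] (U : Matrix m m ℍ[ℝ]) : Prop :=
  Uᴴ * U = 1

/-- `A` and `B` are unitarily similar if `A = Uᴴ * B * U` for some unitary `U`. -/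
def UnitarilySimilar {m : Type*} [Fintype m] [DecidableEq m] (A B : Matrix m m ℍ[ℝ]) : Prop :=
  ∃ U : Matrix m m ℍ[ℝ], IsUnitaryM U ∧ A = Uᴴ * B * U

/-- The block matrix `A_M = [[0, I, M],[0, 0, I],[0, 0, 0]]`, indexed by `Fin 3 × Fin n`. -/
def threeNil {n : ℕ} (M : Matrix (Fin n) (Fin n) ℍ[ℝ]) :
    Matrix (Fin 3 × Fin n) (Fin 3 × Fin n) ℍ[ℝ] :=
  fun x y =>
    let d : ℍ[ℝ] := if x.2 = y.2 then 1 else 0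
    if x.1 = 0 ∧ y.1 = 1 then d
    else if x.1 = 0 ∧ y.1 = 2 then M x.2 y.2
    else if x.1 = 1 ∧ y.1 = 2 then d
    else 0

namespace ThreeNilAux

variable {n : ℕ}

/-- left inverse is right inverse in a finite-dimensional algebra -/
lemma mul_eq_one_comm_fd {A : Type*} [Ring A] [Algebra ℝ A] [Module.Finite ℝ A]
    {a b : A} (h : a * b = 1) : b * a = 1 := by
  have h1 : (LinearMap.mulLeft ℝ a) * (LinearMap.mulLeft ℝ b) = 1 := by
    rw [Module.End.mul_eq_comp, ← LinearMap.mulLeft_mul, h, LinearMap.mulLeft_one]; rfl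
  have h2 := mul_eq_one_comm.mp h1
  have h3 := congrFun (congrArg DFunLike.coe h2) (1 : A)
  simpa using h3

/-- the (i,j) block of a (Fin 3 × Fin n)-indexed matrix -/
def blk (W : Matrix (Fin 3 × Fin n) (Fin 3 × Fin n) ℍ[ℝ]) (i j : Fin 3) :
    Matrix (Fin n) (Fin n) ℍ[ℝ] :=
  of fun a b => W (i, a) (j, b)

lemma blk_apply (W : Matrix (Fin 3 × Fin n) (Fin 3 × Fin n) ℍ[ℝ]) (i j : Fin 3) (a b : Fin n) :
    blk W i j a b = W (i, a) (j, b) := rfl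

lemma blk_ext {W X : Matrix (Fin 3 × Fin n) (Fin 3 × Fin n) ℍ[ℝ]}
    (h : ∀ i j, blk W i j = blk X i j) : W = X := by
  funext x y
  have := congrFun (congrFun (h x.1 y.1) x.2) y.2
  simpa [blk_apply] using this

lemma blk_mul (W X : Matrix (Fin 3 × Fin n) (Fin 3 × Fin n) ℍ[ℝ]) (i j : Fin 3) :
    blk (W * X) i j =
      blk W i 0 * blk X 0 j + blk W i 1 * blk X 1 j + blk W i 2 * blk X 2 j := by
  funext a b
  simp [blk_apply, Matrix.mul_apply, Fintype.sum_prod_type, Fin.sum_univ_three,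
    Finset.sum_add_distrib]

lemma blk_conjTranspose (W : Matrix (Fin 3 × Fin n) (Fin 3 × Fin n) ℍ[ℝ]) (i j : Fin 3) :
    blk Wᴴ i j = (blk W j i)ᴴ := rfl

lemma blk_zero (i j : Fin 3) :
    blk (0 : Matrix (Fin 3 × Fin n) (Fin 3 × Fin n) ℍ[ℝ]) i j = 0 := rfl

lemma blk_one (i j : Fin 3) :
    blk (1 : Matrix (Fin 3 × Fin n) (Fin 3 × Fin n) ℍ[ℝ]) i j = if i = j then 1 else 0 := by
  funext a b
  by_cases h : i = j <;>
    simp [blk_apply, Matrix.one_apply, Prod.ext_iff, h]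

lemma blk_threeNil (M : Matrix (Fin n) (Fin n) ℍ[ℝ]) (i j : Fin 3) :
    blk (threeNil M) i j =
      if i = 0 ∧ j = 1 then 1
      else if i = 0 ∧ j = 2 then M
      else if i = 1 ∧ j = 2 then 1
      else 0 := by
  fin_cases i <;> fin_cases j <;>
    · funext a b
      simp (config := { decide := true }) [blk_apply, threeNil, Matrix.one_apply]

/-- the block-diagonal matrix diag(V, V, V) -/
def diag3 (V : Matrix (Fin n) (Fin n) ℍ[ℝ]) :
    Matrix (Fin 3 × Fin n) (Fin 3 × Fin n) ℍ[ℝ] :=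
  of fun x y => if x.1 = y.1 then V x.2 y.2 else 0

lemma blk_diag3 (V : Matrix (Fin n) (Fin n) ℍ[ℝ]) (i j : Fin 3) :
    blk (diag3 V) i j = if i = j then V else 0 := by
  funext a b
  by_cases h : i = j <;> simp [blk_apply, diag3, h]

lemma diag3_conjTranspose (V : Matrix (Fin n) (Fin n) ℍ[ℝ]) :
    (diag3 V)ᴴ = diag3 Vᴴ := by
  funext x y
  by_cases h : x.1 = y.1 <;>
    simp [diag3, Matrix.conjTranspose_apply, h, eq_comm]

lemma blk_diag3_mul (V : Matrix (Fin n) (Fin n) ℍ[ℝ])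
    (X : Matrix (Fin 3 × Fin n) (Fin 3 × Fin n) ℍ[ℝ]) (i j : Fin 3) :
    blk (diag3 V * X) i j = V * blk X i j := by
  rw [blk_mul]
  fin_cases i <;> simp (config := { decide := true }) [blk_diag3]

lemma blk_mul_diag3 (V : Matrix (Fin n) (Fin n) ℍ[ℝ])
    (X : Matrix (Fin 3 × Fin n) (Fin 3 × Fin n) ℍ[ℝ]) (i j : Fin 3) :
    blk (X * diag3 V) i j = blk X i j * V := by
  rw [blk_mul]
  fin_cases j <;> simp (config := { decide := true }) [blk_diag3]

end ThreeNilAux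

open ThreeNilAux

/-- **Theorem 3.2(b), key gadget.** -/
theorem threeNil_unitarily_similar_iff {n : ℕ} (M N : Matrix (Fin n) (Fin n) ℍ[ℝ]) :
    (threeNil M ^ 3 = 0 ∧ threeNil N ^ 3 = 0) ∧
    (UnitarilySimilar (threeNil M) (threeNil N) ↔ UnitarilySimilar M N) := by
  have cube : ∀ P : Matrix (Fin n) (Fin n) ℍ[ℝ], threeNil P ^ 3 = 0 := by
    intro P
    have : threeNil P ^ 3 = threeNil P * threeNil P * threeNil P := by
      rw [pow_succ, pow_succ, pow_one]
    rw [this]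
    apply blk_ext
    intro i j
    fin_cases i <;> fin_cases j <;>
      simp [blk_mul, blk_threeNil, blk_one, blk_zero]
  refine ⟨⟨cube M, cube N⟩, ?_, ?_⟩
  · -- forward direction
    rintro ⟨W, hW, hsim⟩
    have hWW' : W * Wᴴ = 1 := mul_eq_one_comm_fd hW
    have heq : W * threeNil M = threeNil N * W := by
      rw [hsim, ← Matrix.mul_assoc, ← Matrix.mul_assoc, hWW', Matrix.one_mul]
    set B : Fin 3 → Fin 3 → Matrix (Fin n) (Fin n) ℍ[ℝ] := fun i j => blk W i j with hB
    have hblk : ∀ i j, blk (W * threeNil M) i j = blk (threeNil N * W) i j := by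
      intro i j; rw [heq]
    have e10 : B 2 0 = 0 := by
      have := hblk 1 0
      simpa [blk_mul, blk_threeNil, hB] using this.symm
    have e11 : B 1 0 = B 2 1 := by
      have := hblk 1 1
      simpa [blk_mul, blk_threeNil, hB] using this
    have e22 : B 2 0 * M + B 2 1 = 0 := by
      have := hblk 2 2
      simpa [blk_mul, blk_threeNil, hB] using this
    have e21 : B 2 1 = 0 := by
      rw [e10, Matrix.zero_mul, zero_add] at e22; exact e22
    have e10' : B 1 0 = 0 := by rw [e11, e21]
    have e01 : B 0 0 = B 1 1 + N * B 2 1 := by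
      have := hblk 0 1
      simpa [blk_mul, blk_threeNil, hB] using this
    have eV1 : B 0 0 = B 1 1 := by rw [e01, e21, Matrix.mul_zero, add_zero]
    have e12 : B 1 0 * M + B 1 1 = B 2 2 := by
      have := hblk 1 2
      simpa [blk_mul, blk_threeNil, hB] using this
    have eV2 : B 1 1 = B 2 2 := by rw [← e12, e10', Matrix.zero_mul, zero_add]
    -- unitarity blocks
    have hu : ∀ i j, blk (Wᴴ * W) i j = blk (1 : Matrix (Fin 3 × Fin n) (Fin 3 × Fin n) ℍ[ℝ]) i j := by
      intro i j; rw [hW]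
    have u00 : (B 0 0)ᴴ * B 0 0 + (B 1 0)ᴴ * B 1 0 + (B 2 0)ᴴ * B 2 0 = 1 := by
      have := hu 0 0
      simpa [blk_mul, blk_conjTranspose, blk_one, hB] using this
    have hVu : (B 0 0)ᴴ * B 0 0 = 1 := by
      rw [e10, e10'] at u00
      simpa using u00
    have hVV' : B 0 0 * (B 0 0)ᴴ = 1 := mul_eq_one_comm_fd hVu
    have u01 : (B 0 0)ᴴ * B 0 1 + (B 1 0)ᴴ * B 1 1 + (B 2 0)ᴴ * B 2 1 = 0 := by
      have := hu 0 1
      simpa [blk_mul, blk_conjTranspose, blk_one, hB] using this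
    have e01' : B 0 1 = 0 := by
      rw [e10, e10'] at u01
      simp only [conjTranspose_zero, Matrix.zero_mul, add_zero] at u01
      calc B 0 1 = (B 0 0 * (B 0 0)ᴴ) * B 0 1 := by rw [hVV', Matrix.one_mul]
        _ = B 0 0 * ((B 0 0)ᴴ * B 0 1) := by rw [Matrix.mul_assoc]
        _ = 0 := by rw [u01, Matrix.mul_zero]
    have u12 : (B 0 1)ᴴ * B 0 2 + (B 1 1)ᴴ * B 1 2 + (B 2 1)ᴴ * B 2 2 = 0 := by
      have := hu 1 2
      simpa [blk_mul, blk_conjTranspose, blk_one, hB] using this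
    have e12' : B 1 2 = 0 := by
      rw [e01', e21] at u12
      simp only [conjTranspose_zero, Matrix.zero_mul, add_zero, zero_add] at u12
      rw [← eV1] at u12
      calc B 1 2 = (B 0 0 * (B 0 0)ᴴ) * B 1 2 := by rw [hVV', Matrix.one_mul]
        _ = B 0 0 * ((B 0 0)ᴴ * B 1 2) := by rw [Matrix.mul_assoc]
        _ = 0 := by rw [u12, Matrix.mul_zero]
    have e02 : B 0 0 * M + B 0 1 = B 1 2 + N * B 2 2 := by
      have := hblk 0 2
      simpa [blk_mul, blk_threeNil, hB] using this
    have key : B 0 0 * M = N * B 0 0 := by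
      rw [e01', e12', add_zero, zero_add, ← eV2, ← eV1] at e02
      exact e02
    refine ⟨B 0 0, hVu, ?_⟩
    calc M = ((B 0 0)ᴴ * B 0 0) * M := by rw [hVu, Matrix.one_mul]
      _ = (B 0 0)ᴴ * (B 0 0 * M) := by rw [Matrix.mul_assoc]
      _ = (B 0 0)ᴴ * (N * B 0 0) := by rw [key]
      _ = (B 0 0)ᴴ * N * B 0 0 := by rw [Matrix.mul_assoc]
  · -- backward direction
    rintro ⟨U, hU, hMN⟩
    have hU' : Uᴴ * U = 1 := hU
    refine ⟨diag3 U, ?_, ?_⟩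
    · show (diag3 U)ᴴ * diag3 U = 1
      rw [diag3_conjTranspose]
      apply blk_ext
      intro i j
      rw [blk_diag3_mul, blk_diag3, blk_one]
      by_cases h : i = j <;> simp [h, hU']
    · rw [diag3_conjTranspose]
      apply blk_ext
      intro i j
      rw [blk_mul_diag3, blk_diag3_mul, blk_threeNil, blk_threeNil]
      split_ifs with h1 h2 h3
      · rw [Matrix.mul_one]; exact hU'.symm
      · exact hMN
      · rw [Matrix.mul_one]; exact hU'.symm
      · rw [Matrix.mul_zero, Matrix.zero_mul]
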